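/- Define H_B(σ,x) = ½(Erfc((x − (λ₁/λ₂)σ)/√(2σ)) + e^{2λ₁x/λ₂}·Erfc((x + (λ₁/λ₂)σ)/√(2σ))) for σ, x > 0 and λ₁, λ₂ > 0. Then 0 ≤ H_B(σ,x) ≤ 1 for all σ, x > 0, σ ↦ H_B(σ,x) is nondecreasing, and for any nonnegative integrable function q with ∫₀^∞ q(x) dx ≤ 1, the set {P > 0 : P ≥ ∫₀^∞ H_B(λ₂P, x) q(x) dx} is nonempty and its infimum J satisfies 0 ≤ J ≤ 1. -/

import Mathlib

open MeasureTheory Real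

/-- The complementary error function `Erfc(x) = 1 − (2/√π)∫₀ˣ e^{−t²} dt`. -/
noncomputable def Erfc (x : ℝ) : ℝ :=
  1 - (2 / Real.sqrt Real.pi) * ∫ t in (0:ℝ)..x, Real.exp (-t ^ 2)

/-- The first-passage cumulative distribution to the moving boundary
`t ↦ (lam₁/lam₂)t` for Brownian motion started at `x`. -/
noncomputable def HB (lam₁ lam₂ σ x : ℝ) : ℝ :=
  (1 / 2) * (Erfc ((x - (lam₁ / lam₂) * σ) / Real.sqrt (2 * σ)) +
    Real.exp (2 * lam₁ * x / lam₂) * Erfc ((x + (lam₁ / lam₂) * σ) / Real.sqrt (2 * σ)))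

open Filter Topology Set intervalIntegral

section Aux

lemma expsq_integrable : Integrable (fun t : ℝ => Real.exp (-t ^ 2)) := by
  simpa using integrable_exp_neg_mul_sq (one_pos)

lemma expsq_Ioi : (∫ t in Set.Ioi (0:ℝ), Real.exp (-t ^ 2)) = Real.sqrt Real.pi / 2 := by
  simpa using integral_gaussian_Ioi 1

lemma expsq_Iic : (∫ t in Set.Iic (0:ℝ), Real.exp (-t ^ 2)) = Real.sqrt Real.pi / 2 := by
  have := integral_comp_neg_Iic (0:ℝ) (fun t => Real.exp (-t ^ 2))
  simp only [neg_sq, neg_zero] at this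
  rw [this, expsq_Ioi]

lemma primitive_le (x : ℝ) : (∫ t in (0:ℝ)..x, Real.exp (-t ^ 2)) ≤ Real.sqrt Real.pi / 2 := by
  rcases le_or_gt 0 x with h | h
  · rw [intervalIntegral.integral_of_le h, ← expsq_Ioi]
    apply setIntegral_mono_set expsq_integrable.integrableOn
    · exact Eventually.of_forall fun t => (Real.exp_pos _).le
    · exact HasSubset.Subset.eventuallyLE Set.Ioc_subset_Ioi_self
  · rw [intervalIntegral.integral_of_ge h.le]
    have : (0:ℝ) ≤ ∫ t in Set.Ioc x 0, Real.exp (-t ^ 2) :=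
      setIntegral_nonneg measurableSet_Ioc fun t _ => (Real.exp_pos _).le
    linarith [Real.sqrt_nonneg Real.pi]

lemma primitive_ge (x : ℝ) : -(Real.sqrt Real.pi / 2) ≤ ∫ t in (0:ℝ)..x, Real.exp (-t ^ 2) := by
  rcases le_or_gt 0 x with h | h
  · have : (0:ℝ) ≤ ∫ t in (0:ℝ)..x, Real.exp (-t ^ 2) :=
      intervalIntegral.integral_nonneg h fun t _ => (Real.exp_pos _).le
    linarith [Real.sqrt_nonneg Real.pi]
  · rw [intervalIntegral.integral_of_ge h.le, neg_le_neg_iff, ← expsq_Iic]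
    apply setIntegral_mono_set expsq_integrable.integrableOn
    · exact Eventually.of_forall fun t => (Real.exp_pos _).le
    · exact HasSubset.Subset.eventuallyLE Set.Ioc_subset_Iic_self

lemma sqrt_pi_pos : 0 < Real.sqrt Real.pi := Real.sqrt_pos.mpr Real.pi_pos

lemma Erfc_nonneg (x : ℝ) : 0 ≤ Erfc x := by
  have h := primitive_le x
  have hp := sqrt_pi_pos
  unfold Erfc
  rw [sub_nonneg]
  calc 2 / Real.sqrt Real.pi * ∫ t in (0:ℝ)..x, Real.exp (-t ^ 2)
      ≤ 2 / Real.sqrt Real.pi * (Real.sqrt Real.pi / 2) := by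
        apply mul_le_mul_of_nonneg_left h (by positivity)
    _ = 1 := by field_simp

lemma Erfc_le_two (x : ℝ) : Erfc x ≤ 2 := by
  have h := primitive_ge x
  have hp := sqrt_pi_pos
  unfold Erfc
  have : 2 / Real.sqrt Real.pi * -(Real.sqrt Real.pi / 2) ≤
      2 / Real.sqrt Real.pi * ∫ t in (0:ℝ)..x, Real.exp (-t ^ 2) :=
    mul_le_mul_of_nonneg_left h (by positivity)
  have h2 : 2 / Real.sqrt Real.pi * -(Real.sqrt Real.pi / 2) = -1 := by
    field_simp
  linarith

lemma Erfc_hasDerivAt (x : ℝ) :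
    HasDerivAt Erfc (-(2 / Real.sqrt Real.pi * Real.exp (-x ^ 2))) x := by
  have hcont : Continuous fun t : ℝ => Real.exp (-t ^ 2) := by continuity
  have h1 : HasDerivAt (fun y => ∫ t in (0:ℝ)..y, Real.exp (-t ^ 2))
      (Real.exp (-x ^ 2)) x :=
    intervalIntegral.integral_hasDerivAt_right
      (hcont.intervalIntegrable _ _)
      (hcont.stronglyMeasurableAtFilter _ _) hcont.continuousAt
  exact ((h1.const_mul (2 / Real.sqrt Real.pi)).const_sub 1)

lemma Erfc_continuous : Continuous Erfc :=
  continuous_iff_continuousAt.mpr fun x => (Erfc_hasDerivAt x).continuousAt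

lemma Erfc_tendsto_atTop : Tendsto Erfc atTop (𝓝 0) := by
  have h : Tendsto (fun y : ℝ => ∫ t in (0:ℝ)..y, Real.exp (-t ^ 2)) atTop
      (𝓝 (Real.sqrt Real.pi / 2)) := by
    rw [← expsq_Ioi]
    exact intervalIntegral_tendsto_integral_Ioi 0 expsq_integrable.integrableOn tendsto_id
  have := (h.const_mul (2 / Real.sqrt Real.pi)).const_sub 1
  convert this using 2
  · rfl
  have hp := sqrt_pi_pos
  field_simp
  ring

lemma Erfc_tendsto_atBot : Tendsto Erfc atBot (𝓝 2) := by
  have h : Tendsto (fun y : ℝ => ∫ t in y..(0:ℝ), Real.exp (-t ^ 2)) atBot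
      (𝓝 (Real.sqrt Real.pi / 2)) := by
    rw [← expsq_Iic]
    exact intervalIntegral_tendsto_integral_Iic 0 expsq_integrable.integrableOn tendsto_id
  have h2 : Tendsto (fun y : ℝ => ∫ t in (0:ℝ)..y, Real.exp (-t ^ 2)) atBot
      (𝓝 (-(Real.sqrt Real.pi / 2))) := by
    have := h.neg
    convert this using 2 with y
    rw [← intervalIntegral.integral_symm]
  have := (h2.const_mul (2 / Real.sqrt Real.pi)).const_sub 1
  convert this using 2
  · rfl
  have hp := sqrt_pi_pos
  field_simp
  ring

lemma HB_deriv (lam₁ lam₂ x : ℝ) (h1 : 0 < lam₁) (h2 : 0 < lam₂) (hx : 0 < x)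
    {σ : ℝ} (hσ : 0 < σ) :
    ∃ D, HasDerivAt (fun σ => HB lam₁ lam₂ σ x) D σ ∧ 0 < D := by
  set a := lam₁ / lam₂ with ha_def
  have ha : 0 < a := div_pos h1 h2
  have h2σ : (0:ℝ) < 2 * σ := by linarith
  set s := Real.sqrt (2 * σ) with hs_def
  have hs : 0 < s := Real.sqrt_pos.mpr h2σ
  have hs2 : s ^ 2 = 2 * σ := Real.sq_sqrt h2σ.le
  have hders : HasDerivAt (fun σ : ℝ => Real.sqrt (2 * σ)) (1 / s) σ := by
    have h := (Real.hasDerivAt_sqrt (ne_of_gt h2σ)).comp σ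
      ((hasDerivAt_id σ).const_mul 2)
    refine h.congr_deriv ?_
    rw [hs_def]
    ring
  have hu : HasDerivAt (fun σ : ℝ => (x - a * σ) / Real.sqrt (2 * σ))
      ((-a * s - (x - a * σ) * (1 / s)) / s ^ 2) σ := by
    apply HasDerivAt.div _ hders (ne_of_gt hs)
    simpa using ((hasDerivAt_id σ).const_mul a).const_sub x
  have hv : HasDerivAt (fun σ : ℝ => (x + a * σ) / Real.sqrt (2 * σ))
      ((a * s - (x + a * σ) * (1 / s)) / s ^ 2) σ := by
    apply HasDerivAt.div _ hders (ne_of_gt hs)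
    simpa using ((hasDerivAt_id σ).const_mul a).const_add x
  set U' := (-a * s - (x - a * σ) * (1 / s)) / s ^ 2 with hU'
  set V' := (a * s - (x + a * σ) * (1 / s)) / s ^ 2 with hV'
  set E := Real.exp (-((x - a * σ) / s) ^ 2) with hE
  set Ev := Real.exp (-((x + a * σ) / s) ^ 2) with hEv
  set e := Real.exp (2 * lam₁ * x / lam₂) with he
  have hU := (Erfc_hasDerivAt ((x - a * σ) / s)).comp σ hu
  have hV := (Erfc_hasDerivAt ((x + a * σ) / s)).comp σ hv
  have hH : HasDerivAt (fun σ => HB lam₁ lam₂ σ x)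
      ((1/2) * ((-(2 / Real.sqrt Real.pi * E)) * U' +
        e * ((-(2 / Real.sqrt Real.pi * Ev)) * V'))) σ := by
    have := ((hU.add (hV.const_mul e)).const_mul (1/2))
    exact this
  refine ⟨_, hH, ?_⟩
  have hexp : e * Ev = E := by
    rw [he, hEv, hE, ← Real.exp_add]
    congr 1
    rw [div_pow, div_pow, hs2, ha_def]
    field_simp
    ring
  have hsub : e * ((-(2 / Real.sqrt Real.pi * Ev)) * V') =
      (-(2 / Real.sqrt Real.pi * E)) * V' := by
    rw [← hexp]; ring
  have hsum : U' + V' = -(2 * x) / s ^ 3 := by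
    rw [hU', hV']
    field_simp
    ring
  have hkey : (1/2 : ℝ) * ((-(2 / Real.sqrt Real.pi * E)) * U' +
      e * ((-(2 / Real.sqrt Real.pi * Ev)) * V'))
      = (2 * x) / s ^ 3 * E / Real.sqrt Real.pi := by
    rw [hsub, show (-(2 / Real.sqrt Real.pi * E)) * U' + (-(2 / Real.sqrt Real.pi * E)) * V'
      = (-(2 / Real.sqrt Real.pi * E)) * (U' + V') by ring, hsum]
    field_simp
  rw [hkey]
  have hEpos : 0 < E := Real.exp_pos _
  have := sqrt_pi_pos
  positivity

lemma HB_monotone (lam₁ lam₂ x : ℝ) (h1 : 0 < lam₁) (h2 : 0 < lam₂) (hx : 0 < x) :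
    MonotoneOn (fun σ => HB lam₁ lam₂ σ x) (Set.Ioi 0) := by
  have hdiff : DifferentiableOn ℝ (fun σ => HB lam₁ lam₂ σ x) (Set.Ioi 0) := by
    intro σ hσ
    obtain ⟨D, hD, _⟩ := HB_deriv lam₁ lam₂ x h1 h2 hx (Set.mem_Ioi.mp hσ)
    exact hD.differentiableAt.differentiableWithinAt
  apply monotoneOn_of_deriv_nonneg (convex_Ioi 0) hdiff.continuousOn
  · rw [interior_Ioi]; exact hdiff
  · intro σ hσ
    rw [interior_Ioi] at hσ
    obtain ⟨D, hD, hDpos⟩ := HB_deriv lam₁ lam₂ x h1 h2 hx (Set.mem_Ioi.mp hσ)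
    rw [hD.deriv]
    exact hDpos.le

lemma sqrt2σ_tendsto : Tendsto (fun σ : ℝ => Real.sqrt (2 * σ)) atTop atTop := by
  apply Filter.tendsto_atTop_atTop.mpr
  intro b
  refine ⟨b ^ 2, fun σ hσ => ?_⟩
  rcases le_or_gt b 0 with hb | hb
  · exact hb.trans (Real.sqrt_nonneg _)
  · rw [show b = Real.sqrt (b ^ 2) by rw [Real.sqrt_sq hb.le]]
    apply Real.sqrt_le_sqrt
    nlinarith

lemma HB_tendsto (lam₁ lam₂ x : ℝ) (h1 : 0 < lam₁) (h2 : 0 < lam₂) (hx : 0 < x) :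
    Tendsto (fun σ => HB lam₁ lam₂ σ x) atTop (𝓝 1) := by
  set a := lam₁ / lam₂ with ha_def
  have ha : 0 < a := div_pos h1 h2
  have hsq := sqrt2σ_tendsto
  have hEq : ∀ᶠ σ : ℝ in atTop, (0:ℝ) < σ ∧ (1:ℝ) ≤ Real.sqrt (2 * σ) := by
    filter_upwards [eventually_ge_atTop (1:ℝ)] with σ hσ
    constructor
    · linarith
    · rw [show (1:ℝ) = Real.sqrt 1 by simp]
      exact Real.sqrt_le_sqrt (by linarith)
  have hu_t : Tendsto (fun σ : ℝ => (x - a * σ) / Real.sqrt (2 * σ)) atTop atBot := by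
    apply Tendsto.congr' (f₁ := fun σ : ℝ => x / Real.sqrt (2 * σ) + -(a / 2 * Real.sqrt (2 * σ)))
    · filter_upwards [hEq] with σ ⟨hσ, _⟩
      have h2σ : (0:ℝ) < 2 * σ := by linarith
      set s := Real.sqrt (2 * σ) with hs_def
      have hs : 0 < s := Real.sqrt_pos.mpr h2σ
      have hs2 : s ^ 2 = 2 * σ := Real.sq_sqrt h2σ.le
      field_simp
      linear_combination (-a) * hs2
    · apply tendsto_atBot_add_left_of_ge' atTop x
      · filter_upwards [hEq] with σ ⟨hσ, hs1⟩
        rw [div_le_iff₀ (by linarith)]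
        nlinarith
      · have : Tendsto (fun σ : ℝ => a / 2 * Real.sqrt (2 * σ)) atTop atTop :=
          hsq.const_mul_atTop (by positivity)
        exact tendsto_neg_atTop_atBot.comp this
  have hv_t : Tendsto (fun σ : ℝ => (x + a * σ) / Real.sqrt (2 * σ)) atTop atTop := by
    apply Tendsto.congr' (f₁ := fun σ : ℝ => x / Real.sqrt (2 * σ) + a / 2 * Real.sqrt (2 * σ))
    · filter_upwards [hEq] with σ ⟨hσ, _⟩
      have h2σ : (0:ℝ) < 2 * σ := by linarith
      set s := Real.sqrt (2 * σ) with hs_def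
      have hs : 0 < s := Real.sqrt_pos.mpr h2σ
      have hs2 : s ^ 2 = 2 * σ := Real.sq_sqrt h2σ.le
      field_simp
      linear_combination a * hs2
    · apply tendsto_atTop_add_left_of_le' atTop 0
      · filter_upwards [hEq] with σ ⟨hσ, hs1⟩
        positivity
      · exact hsq.const_mul_atTop (by positivity)
  have hA : Tendsto (fun σ : ℝ => Erfc ((x - a * σ) / Real.sqrt (2 * σ))) atTop (𝓝 2) :=
    Erfc_tendsto_atBot.comp hu_t
  have hB : Tendsto (fun σ : ℝ => Erfc ((x + a * σ) / Real.sqrt (2 * σ))) atTop (𝓝 0) :=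
    Erfc_tendsto_atTop.comp hv_t
  have htot := ((hA.add (hB.const_mul (Real.exp (2 * lam₁ * x / lam₂)))).const_mul (1/2 : ℝ))
  convert htot using 2
  · rfl
  norm_num

lemma HB_nonneg (lam₁ lam₂ σ x : ℝ) : 0 ≤ HB lam₁ lam₂ σ x := by
  unfold HB
  have h1 := Erfc_nonneg ((x - lam₁ / lam₂ * σ) / Real.sqrt (2 * σ))
  have h2 := Erfc_nonneg ((x + lam₁ / lam₂ * σ) / Real.sqrt (2 * σ))
  have h3 := (Real.exp_pos (2 * lam₁ * x / lam₂)).le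
  nlinarith

lemma HB_le_one (lam₁ lam₂ : ℝ) (h1 : 0 < lam₁) (h2 : 0 < lam₂) {σ x : ℝ}
    (hσ : 0 < σ) (hx : 0 < x) : HB lam₁ lam₂ σ x ≤ 1 := by
  apply ge_of_tendsto (HB_tendsto lam₁ lam₂ x h1 h2 hx)
  filter_upwards [eventually_ge_atTop σ] with τ hτ
  exact HB_monotone lam₁ lam₂ x h1 h2 hx (Set.mem_Ioi.mpr hσ)
    (Set.mem_Ioi.mpr (lt_of_lt_of_le hσ hτ)) hτ

lemma HB_continuous_x (lam₁ lam₂ σ : ℝ) : Continuous (fun x => HB lam₁ lam₂ σ x) := by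
  unfold HB
  apply continuous_const.mul
  apply Continuous.add
  · exact Erfc_continuous.comp (by continuity)
  · exact (Real.continuous_exp.comp (by continuity)).mul (Erfc_continuous.comp (by continuity))

end Aux

/-- `0 ≤ H_B ≤ 1`, `σ ↦ H_B(σ,x)` is nondecreasing, and for any sub-probability
density `q`, the set `{P > 0 : P ≥ ∫₀^∞ H_B(lam₂P, x) q(x) dx}` is nonempty with
infimum `J ∈ [0,1]`. -/
theorem HB_properties (lam₁ lam₂ : ℝ) (hlam₁ : 0 < lam₁) (hlam₂ : 0 < lam₂) :
    (∀ σ x : ℝ, 0 < σ → 0 < x → 0 ≤ HB lam₁ lam₂ σ x ∧ HB lam₁ lam₂ σ x ≤ 1) ∧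
    (∀ x : ℝ, 0 < x → MonotoneOn (fun σ => HB lam₁ lam₂ σ x) (Set.Ioi 0)) ∧
    ∀ q : ℝ → ℝ, (∀ x, 0 ≤ q x) → MeasureTheory.IntegrableOn q (Set.Ioi 0) →
      (∫ x in Set.Ioi (0:ℝ), q x) ≤ 1 →
      ({P : ℝ | 0 < P ∧
          (∫ x in Set.Ioi (0:ℝ), HB lam₁ lam₂ (lam₂ * P) x * q x) ≤ P}).Nonempty ∧
        0 ≤ sInf {P : ℝ | 0 < P ∧
          (∫ x in Set.Ioi (0:ℝ), HB lam₁ lam₂ (lam₂ * P) x * q x) ≤ P} ∧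
        sInf {P : ℝ | 0 < P ∧
          (∫ x in Set.Ioi (0:ℝ), HB lam₁ lam₂ (lam₂ * P) x * q x) ≤ P} ≤ 1 := by
  refine ⟨fun σ x hσ hx => ⟨HB_nonneg _ _ _ _, HB_le_one lam₁ lam₂ hlam₁ hlam₂ hσ hx⟩,
    fun x hx => HB_monotone lam₁ lam₂ x hlam₁ hlam₂ hx, ?_⟩
  intro q hq hqint hq1
  have hσ : 0 < lam₂ * 1 := by linarith
  have hmeas : AEStronglyMeasurable (fun x => HB lam₁ lam₂ (lam₂ * 1) x * q x)
      (volume.restrict (Set.Ioi (0:ℝ))) :=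
    ((HB_continuous_x lam₁ lam₂ (lam₂ * 1)).aestronglyMeasurable).mul
      hqint.aestronglyMeasurable
  have hint : IntegrableOn (fun x => HB lam₁ lam₂ (lam₂ * 1) x * q x) (Set.Ioi 0) := by
    apply Integrable.mono' hqint hmeas
    rw [ae_restrict_iff' measurableSet_Ioi]
    apply Eventually.of_forall
    intro x hx
    rw [Real.norm_eq_abs, abs_mul, abs_of_nonneg (HB_nonneg _ _ _ _), abs_of_nonneg (hq x)]
    calc HB lam₁ lam₂ (lam₂ * 1) x * q x
        ≤ 1 * q x := mul_le_mul_of_nonneg_right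
          (HB_le_one lam₁ lam₂ hlam₁ hlam₂ hσ hx) (hq x)
      _ = q x := one_mul _
  have hle : (∫ x in Set.Ioi (0:ℝ), HB lam₁ lam₂ (lam₂ * 1) x * q x) ≤
      ∫ x in Set.Ioi (0:ℝ), q x := by
    apply setIntegral_mono_on hint hqint measurableSet_Ioi
    intro x hx
    calc HB lam₁ lam₂ (lam₂ * 1) x * q x
        ≤ 1 * q x := mul_le_mul_of_nonneg_right
          (HB_le_one lam₁ lam₂ hlam₁ hlam₂ hσ hx) (hq x)
      _ = q x := one_mul _
  have h1mem : (1:ℝ) ∈ {P : ℝ | 0 < P ∧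
      (∫ x in Set.Ioi (0:ℝ), HB lam₁ lam₂ (lam₂ * P) x * q x) ≤ P} :=
    ⟨one_pos, hle.trans hq1⟩
  have hbdd : BddBelow {P : ℝ | 0 < P ∧
      (∫ x in Set.Ioi (0:ℝ), HB lam₁ lam₂ (lam₂ * P) x * q x) ≤ P} :=
    ⟨0, fun b hb => hb.1.le⟩
  exact ⟨⟨1, h1mem⟩, le_csInf ⟨1, h1mem⟩ (fun b hb => hb.1.le), csInf_le hbdd h1mem⟩
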